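/- arXiv:2305.11356 — 3 statements merged into one kernel-verified Lean document; each statement's English description precedes it below -/
import Mathlib

section
/- Let v : R^d → R^d (d ≥ 2) be a polynomial vector field satisfying dev(∇v) = 0, i.e. ∇v(x) = (1/d)(div v(x)) I for all x. Then there exist a scalar a ∈ R and a constant vector b ∈ R^d such that v(x) = a x + b. -/
open MvPolynomial

lemma coeff_pderiv' {d : ℕ} (i : Fin d) (n : Fin d →₀ ℕ) (p : MvPolynomial (Fin d) ℝ) :
    coeff n (pderiv i p) = ((n i : ℝ) + 1) * coeff (n + Finsupp.single i 1) p := by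
  induction p using MvPolynomial.induction_on' with
  | add p q hp hq => simp [map_add, coeff_add, hp, hq, mul_add]
  | monomial s a =>
    rw [pderiv_monomial, coeff_monomial, coeff_monomial]
    split_ifs with h1 h2 h2
    · subst h2
      have : ((n + Finsupp.single i 1 : Fin d →₀ ℕ)) i = n i + 1 := by
        simp [Finsupp.add_apply, Finsupp.single_apply]
      rw [this]; push_cast; ring
    · -- h1 : s - single i 1 = n, but s ≠ n + single i 1 ⇒ s i = 0
      have hsi : s i = 0 := by
        by_contra hne
        apply h2
        ext j
        by_cases hj : j = i
        · subst hj
          have := DFunLike.congr_fun h1 j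
          simp [Finsupp.tsub_apply] at this ⊢
          omega
        · have := DFunLike.congr_fun h1 j
          simp [Finsupp.tsub_apply, Finsupp.single_apply, hj, Ne.symm hj] at this ⊢
          omega
      simp [hsi]
    · exfalso; apply h1; subst h2; ext j
      by_cases hj : j = i
      · subst hj; simp [Finsupp.tsub_apply]
      · simp [Finsupp.tsub_apply, Finsupp.single_apply, Ne.symm hj]
    · ring

lemma pderiv_comm' {d : ℕ} (i j : Fin d) (p : MvPolynomial (Fin d) ℝ) :
    pderiv i (pderiv j p) = pderiv j (pderiv i p) := by
  apply MvPolynomial.ext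
  intro n
  rw [coeff_pderiv', coeff_pderiv', coeff_pderiv', coeff_pderiv']
  have h1 : ((n + Finsupp.single j 1 : Fin d →₀ ℕ)) i = n i + Finsupp.single j 1 i := by
    simp [Finsupp.add_apply]
  have h2 : ((n + Finsupp.single i 1 : Fin d →₀ ℕ)) j = n j + Finsupp.single i 1 j := by
    simp [Finsupp.add_apply]
  have h3 : (n + Finsupp.single i 1) + Finsupp.single j 1
      = (n + Finsupp.single j 1) + Finsupp.single i 1 := add_right_comm _ _ _
  rw [h1, h2, h3]
  by_cases hij : i = j
  · subst hij; ring
  · rw [Finsupp.single_apply, Finsupp.single_apply, if_neg hij, if_neg (Ne.symm hij)]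
    push_cast; ring

lemma eq_C_of_pderiv_eq_zero' {d : ℕ} (p : MvPolynomial (Fin d) ℝ)
    (h : ∀ j, pderiv j p = 0) : p = C (constantCoeff p) := by
  apply MvPolynomial.ext
  intro n
  by_cases hn : n = 0
  · subst hn; simp [coeff_zero_C, constantCoeff_eq]
  · have hex : ∃ i, n i ≠ 0 := by
      by_contra hc
      push_neg at hc
      exact hn (Finsupp.ext fun i => hc i)
    obtain ⟨i, hi⟩ := hex
    have key := coeff_pderiv' i (n - Finsupp.single i 1) p
    rw [h i] at key
    have hrec : (n - Finsupp.single i 1) + Finsupp.single i 1 = n := by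
      ext j
      by_cases hj : j = i
      · subst hj
        simp [Finsupp.tsub_apply, Finsupp.add_apply, Finsupp.single_apply]
        omega
      · simp [Finsupp.tsub_apply, Finsupp.add_apply, Finsupp.single_apply, hj, Ne.symm hj]
    rw [hrec] at key
    simp only [coeff_zero] at key
    have hpos : (((n - Finsupp.single i 1 : Fin d →₀ ℕ)) i : ℝ) + 1 ≠ 0 := by positivity
    have : coeff n p = 0 := by
      rcases mul_eq_zero.mp key.symm with h' | h'
      · exact absurd h' hpos
      · exact h'
    rw [this, coeff_C, if_neg (Ne.symm hn)]

/-- A polynomial vector field `v` on `ℝ^d` (`d ≥ 2`) with `dev(∇v) = 0`,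
i.e. `∂ⱼvᵢ = (1/d)(div v) δᵢⱼ` for all `i, j`, is of Raviart–Thomas form
`v(x) = a x + b`. -/
theorem dev_grad_zero_is_RT (d : ℕ) (hd : 2 ≤ d)
    (v : Fin d → MvPolynomial (Fin d) ℝ)
    (h : ∀ i j : Fin d, (d : ℝ) • pderiv j (v i)
      = if i = j then ∑ k : Fin d, pderiv k (v k) else 0) :
    ∃ (a : ℝ) (b : Fin d → ℝ), ∀ (x : Fin d → ℝ) (i : Fin d),
      eval x (v i) = a * x i + b i := by
  have hd0 : (d : ℝ) ≠ 0 := by positivity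
  have cancel : ∀ q r : MvPolynomial (Fin d) ℝ, (d : ℝ) • q = (d : ℝ) • r → q = r := by
    intro q r hqr
    have := congrArg (fun z => (d : ℝ)⁻¹ • z) hqr
    simpa [smul_smul, inv_mul_cancel₀ hd0] using this
  -- off-diagonal derivatives vanish
  have hoff : ∀ i j : Fin d, i ≠ j → pderiv j (v i) = 0 := by
    intro i j hij
    have := h i j
    rw [if_neg hij] at this
    exact cancel _ 0 (by rw [this, smul_zero])
  set p : Fin d → MvPolynomial (Fin d) ℝ := fun i => pderiv i (v i) with hp
  -- all diagonal derivatives are equal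
  have hpeq : ∀ i j : Fin d, p i = p j := by
    intro i j
    have hi := h i i; have hj := h j j
    rw [if_pos rfl] at hi hj
    have : (d : ℝ) • p i = (d : ℝ) • p j := by rw [hi, hj]
    exact cancel _ _ this
  -- each p i is constant
  have hconst : ∀ i : Fin d, ∀ j : Fin d, pderiv j (p i) = 0 := by
    intro i j
    by_cases hij : j = i
    · subst hij
      -- pick k ≠ j
      have : ∃ k : Fin d, k ≠ j := by
        by_cases h0 : j = ⟨0, by omega⟩
        · exact ⟨⟨1, by omega⟩, by subst h0; simp [Fin.ext_iff]⟩
        · exact ⟨⟨0, by omega⟩, fun he => h0 he.symm⟩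
      obtain ⟨k, hk⟩ := this
      rw [hpeq j k]
      show pderiv j (pderiv k (v k)) = 0
      rw [pderiv_comm', hoff k j hk, map_zero]
    · show pderiv j (pderiv i (v i)) = 0
      rw [pderiv_comm', hoff i j (Ne.symm hij), map_zero]
  have hne : Nonempty (Fin d) := ⟨⟨0, by omega⟩⟩
  obtain ⟨i₀⟩ := hne
  set a : ℝ := constantCoeff (p i₀) with ha
  have hpC : ∀ i : Fin d, p i = C a := by
    intro i
    rw [hpeq i i₀]
    exact eq_C_of_pderiv_eq_zero' _ (hconst i₀)
  -- v i - a * X i is constant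
  refine ⟨a, fun i => constantCoeff (v i - C a * X i), fun x i => ?_⟩
  have hq : v i - C a * X i = C (constantCoeff (v i - C a * X i)) := by
    apply eq_C_of_pderiv_eq_zero'
    intro j
    rw [map_sub, pderiv_C_mul]
    by_cases hij : j = i
    · subst hij
      rw [pderiv_X_self, mul_one]
      have := hpC j
      rw [hp] at this
      simp only at this
      rw [this]; ring
    · rw [pderiv_X_of_ne (Ne.symm hij), hoff i j (Ne.symm hij), mul_zero, sub_zero]
  have : v i = C a * X i + C (constantCoeff (v i - C a * X i)) := by
    rw [← hq]; ring
  rw [this]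
  simp [eval_add, eval_mul, eval_C, eval_X]
end

section
/- Let T be a nondegenerate d-simplex in R^d with faces F₀,…,F_d and outward unit normals n₀,…,n_d. Let A be a d×d matrix with tr A = 0 such that for each face Fᵢ the function x ↦ (A x)·nᵢ is constant on Fᵢ. Then A = 0. -/
open Matrix

/-- Let `T` be a nondegenerate `d`-simplex with vertices `v₀, …, v_d` and, for each `i`,
outward unit normal `n i` to the facet `Fᵢ` opposite to vertex `i`. If `A` is a trace-free
`d×d` matrix such that `x ↦ (A x)·nᵢ` is constant on `Fᵢ` for every `i`, then `A = 0`. -/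
theorem traceless_constant_normal_flux_zero (d : ℕ) (hd : 1 ≤ d)
    (v : Fin (d + 1) → (Fin d → ℝ)) (hv : AffineIndependent ℝ v)
    (n : Fin (d + 1) → (Fin d → ℝ))
    (hunit : ∀ i, n i ⬝ᵥ n i = 1)
    (horth : ∀ i, ∀ j k, j ≠ i → k ≠ i → n i ⬝ᵥ (v j - v k) = 0)
    (hout : ∀ i j, j ≠ i → n i ⬝ᵥ (v i - v j) < 0)
    (A : Matrix (Fin d) (Fin d) ℝ) (htr : A.trace = 0)
    (hconst : ∀ i, ∀ j k, j ≠ i → k ≠ i →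
      A.mulVec (v j) ⬝ᵥ n i = A.mulVec (v k) ⬝ᵥ n i) :
    A = 0 := by
  classical
  have hnt : Nontrivial (Fin (d + 1)) := by
    refine ⟨⟨0, 1, fun h => ?_⟩⟩
    have := congrArg Fin.val h
    simp [Fin.val_one, Nat.mod_eq_of_lt (by omega : 1 < d + 1)] at this
  -- For each `k`, `B k` has rows the normals of facets other than `k`,
  -- and `P k` has columns the edge vectors from vertex `k`.
  set B : Fin (d + 1) → Matrix (Fin d) (Fin d) ℝ :=
    fun k => Matrix.of fun i m => n (k.succAbove i) m with hB
  set P : Fin (d + 1) → Matrix (Fin d) (Fin d) ℝ :=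
    fun k => Matrix.of fun m j => v (k.succAbove j) m - v k m with hP
  have hBP : ∀ k, B k * P k =
      diagonal (fun j => n (k.succAbove j) ⬝ᵥ (v (k.succAbove j) - v k)) := by
    intro k
    ext i j
    rw [mul_apply, diagonal_apply]
    by_cases h : i = j
    · subst h
      rw [if_pos rfl]
      simp [hB, hP, dotProduct, Pi.sub_apply]
    · rw [if_neg h]
      have h1 : k.succAbove j ≠ k.succAbove i :=
        fun hc => h (Fin.succAbove_right_injective hc).symm
      have h2 : k ≠ k.succAbove i := (Fin.succAbove_ne k i).symm
      have := horth (k.succAbove i) (k.succAbove j) k h1 h2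
      simp only [dotProduct, Pi.sub_apply] at this
      simpa [hB, hP] using this
  have hdiag : ∀ k j, n (k.succAbove j) ⬝ᵥ (v (k.succAbove j) - v k) ≠ 0 :=
    fun k j => (hout _ k (Fin.succAbove_ne k j).symm).ne
  have hdetBP : ∀ k, (B k).det * (P k).det ≠ 0 := by
    intro k
    rw [← det_mul, hBP, det_diagonal]
    exact Finset.prod_ne_zero_iff.mpr fun j _ => hdiag k j
  have hPunit : ∀ k, IsUnit (P k).det :=
    fun k => isUnit_iff_ne_zero.mpr (right_ne_zero_of_mul (hdetBP k))
  have hBunit : ∀ k, IsUnit (B k).det :=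
    fun k => isUnit_iff_ne_zero.mpr (left_ne_zero_of_mul (hdetBP k))
  have hvecMulP : ∀ k (r : Fin d → ℝ), vecMul r (P k) = 0 → r = 0 := by
    intro k r hr
    have h1 : vecMul r (P k * (P k)⁻¹) = r := by
      rw [Matrix.mul_nonsing_inv _ (hPunit k), vecMul_one]
    rw [← vecMul_vecMul, hr, zero_vecMul] at h1
    exact h1.symm
  have hvecMulB : ∀ k (r : Fin d → ℝ), vecMul r (B k) = 0 → r = 0 := by
    intro k r hr
    have h1 : vecMul r (B k * (B k)⁻¹) = r := by
      rw [Matrix.mul_nonsing_inv _ (hBunit k), vecMul_one]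
    rw [← vecMul_vecMul, hr, zero_vecMul] at h1
    exact h1.symm
  -- Step 1: each `n i` is a left eigenvector of `A`.
  have heigen : ∀ i, ∃ c : ℝ, vecMul (n i) A = c • n i := by
    intro i
    obtain ⟨k, hk⟩ := exists_ne i
    set u := vecMul (n i) A with hu
    have hdot : ∀ x : Fin d → ℝ, u ⬝ᵥ x = A.mulVec x ⬝ᵥ n i := by
      intro x
      rw [dotProduct_comm (A.mulVec x), dotProduct_mulVec]
    have hden : n i ⬝ᵥ (v i - v k) ≠ 0 := (hout i k hk).ne
    set c : ℝ := (u ⬝ᵥ (v i - v k)) / (n i ⬝ᵥ (v i - v k)) with hc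
    refine ⟨c, ?_⟩
    have hr : vecMul (u - c • n i) (P k) = 0 := by
      funext j
      simp only [Pi.zero_apply]
      have hcol : vecMul (u - c • n i) (P k) j
          = (u - c • n i) ⬝ᵥ (v (k.succAbove j) - v k) := by
        simp [vecMul, dotProduct, hP, Pi.sub_apply]
      rw [hcol, sub_dotProduct, smul_dotProduct]
      by_cases hj : k.succAbove j = i
      · rw [hj, hc, smul_eq_mul, div_mul_cancel₀ _ hden, sub_self]
      · have hkne : k ≠ i := hk
        have h1 : u ⬝ᵥ (v (k.succAbove j) - v k) = 0 := by
          have hsub : u ⬝ᵥ (v (k.succAbove j) - v k)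
              = u ⬝ᵥ v (k.succAbove j) - u ⬝ᵥ v k := by
            rw [← dotProduct_sub]
          rw [hsub, hdot, hdot]
          rw [hconst i (k.succAbove j) k hj hkne]
          ring
        have h2 : n i ⬝ᵥ (v (k.succAbove j) - v k) = 0 :=
          horth i (k.succAbove j) k hj hkne
        rw [h1, h2, smul_zero, sub_zero]
    have := hvecMulP k _ hr
    rw [sub_eq_zero] at this
    exact this
  choose c hcc using heigen
  -- Step 2: all the `c i` coincide.
  set k : Fin (d + 1) := 0 with hk0
  set a : Fin d → ℝ := vecMul (n k) (B k)⁻¹ with ha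
  have haB : vecMul a (B k) = n k := by
    rw [ha, vecMul_vecMul, Matrix.nonsing_inv_mul _ (hBunit k), vecMul_one]
  -- `B k * A` scales each row.
  have hBA : B k * A = diagonal (fun i => c (k.succAbove i)) * B k := by
    ext i j
    have h1 : (B k * A) i j = vecMul (n (k.succAbove i)) A j := by
      simp [mul_apply, vecMul, dotProduct, hB]
    rw [h1, hcc]
    simp [hB, diagonal_mul]
  -- coefficients `a i` are nonzero
  have hane : ∀ i, a i ≠ 0 := by
    intro i hai
    have h1 : vecMul a (B k * P k) = vecMul (n k) (P k) := by
      rw [← vecMul_vecMul, haB]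
    rw [hBP k] at h1
    have h2 := congrFun h1 i
    have h3 : vecMul a (diagonal fun j => n (k.succAbove j) ⬝ᵥ (v (k.succAbove j) - v k)) i
        = a i * (n (k.succAbove i) ⬝ᵥ (v (k.succAbove i) - v k)) := by
      simp [vecMul_diagonal]
    have h4 : vecMul (n k) (P k) i = n k ⬝ᵥ (v (k.succAbove i) - v k) := by
      simp [vecMul, dotProduct, hP, Pi.sub_apply]
    rw [h3, h4] at h2
    have h5 : n k ⬝ᵥ (v (k.succAbove i) - v k) ≠ 0 := by
      have := hout k (k.succAbove i) (Fin.succAbove_ne k i)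
      intro hzero
      have : n k ⬝ᵥ (v k - v (k.succAbove i)) = 0 := by
        have hneg : v k - v (k.succAbove i) = -(v (k.succAbove i) - v k) := by
          abel
        rw [hneg, dotProduct_neg, hzero, neg_zero]
      linarith [hout k (k.succAbove i) (Fin.succAbove_ne k i)]
    rw [hai, zero_mul] at h2
    exact h5 h2.symm
  have hceq : ∀ i, c (k.succAbove i) = c k := by
    intro i
    have h1 : vecMul (n k) A = c k • n k := hcc k
    have h2 : vecMul a (B k * A) = c k • vecMul a (B k) := by
      rw [← vecMul_vecMul, haB, h1]
    rw [hBA, ← vecMul_vecMul] at h2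
    have h3 : vecMul (vecMul a (diagonal fun i => c (k.succAbove i))) (B k)
        = vecMul ((c k) • a) (B k) := by
      rw [h2, smul_vecMul]
    have h4 : vecMul a (diagonal fun i => c (k.succAbove i)) = (c k) • a := by
      have hsub : vecMul (vecMul a (diagonal fun i => c (k.succAbove i)) - (c k) • a) (B k) = 0 := by
        rw [sub_vecMul, h3, sub_self]
      have := hvecMulB k _ hsub
      rwa [sub_eq_zero] at this
    have h5 := congrFun h4 i
    rw [vecMul_diagonal, Pi.smul_apply, smul_eq_mul, mul_comm (c k) (a i)] at h5
    exact mul_left_cancel₀ (hane i) h5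
  have hcall : ∀ j, c j = c k := by
    intro j
    by_cases hj : j = k
    · rw [hj]
    · obtain ⟨i, hi⟩ := Fin.exists_succAbove_eq hj
      rw [← hi]
      exact hceq i
  -- Conclude `A = c k • 1`.
  have hAeq : A = c k • (1 : Matrix (Fin d) (Fin d) ℝ) := by
    have hdiagck : (diagonal fun i => c (k.succAbove i))
        = (c k • 1 : Matrix (Fin d) (Fin d) ℝ) := by
      ext i j
      by_cases h : i = j
      · subst h; simp [diagonal_apply_eq, hcall, one_apply]
      · simp [diagonal_apply_ne _ h, one_apply_ne h]
    have h1 : B k * A = B k * (c k • 1) := by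
      rw [hBA, hdiagck, Matrix.smul_mul, Matrix.one_mul, Matrix.mul_smul, Matrix.mul_one]
    calc A = (B k)⁻¹ * (B k * A) := by
            rw [← Matrix.mul_assoc, Matrix.nonsing_inv_mul _ (hBunit k), Matrix.one_mul]
      _ = (B k)⁻¹ * (B k * (c k • 1)) := by rw [h1]
      _ = c k • 1 := by
            rw [← Matrix.mul_assoc, Matrix.nonsing_inv_mul _ (hBunit k), Matrix.one_mul]
  have hck : c k = 0 := by
    have htr2 : (c k • (1 : Matrix (Fin d) (Fin d) ℝ)).trace = c k * d := by
      simp [Matrix.trace_smul, Matrix.trace_one, mul_comm]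
    rw [hAeq, htr2] at htr
    have hdne : (d : ℝ) ≠ 0 := Nat.cast_ne_zero.mpr (by omega)
    exact (mul_eq_zero.mp htr).resolve_right hdne
  rw [hAeq, hck, zero_smul]
end

section
/- The sum P₁(R^d; S) + sym(x ⊗ H₁(R^d; R^d)) + x x^T H₁(R^d) is direct, and its dimension equals (1/2)·d·(d+1)·(d+3). -/
open Matrix

/-- Matrix-valued fields on `ℝ^d`. -/
abbrev MatField (d : ℕ) := (Fin d → ℝ) → Matrix (Fin d) (Fin d) ℝ

/-- `P₁(ℝ^d; S)`: symmetric-matrix-valued polynomials of degree at most 1. -/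
def P1SymSet (d : ℕ) : Set (MatField d) :=
  {τ | (∀ x, (τ x).IsSymm) ∧
    ∃ (A : Matrix (Fin d) (Fin d) ℝ) (B : Fin d → Matrix (Fin d) (Fin d) ℝ),
      ∀ x, τ x = A + ∑ i : Fin d, x i • B i}

/-- `sym(x ⊗ H₁(ℝ^d; ℝ^d))`: symmetrized tensors `x ⊗ q(x)` with `q` homogeneous linear. -/
def symXH1Set (d : ℕ) : Set (MatField d) :=
  {τ | ∃ M : Matrix (Fin d) (Fin d) ℝ,
    ∀ x, τ x = Matrix.of fun i j =>
      (x i * M.mulVec x j + M.mulVec x i * x j) / 2}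

/-- `x xᵀ H₁(ℝ^d)`: fields `x ↦ x xᵀ ℓ(x)` with `ℓ` homogeneous linear. -/
def xxTH1Set (d : ℕ) : Set (MatField d) :=
  {τ | ∃ l : Fin d → ℝ, ∀ x, τ x = Matrix.of fun i j => x i * x j * (l ⬝ᵥ x)}

namespace Sigma1ppAux

variable (d : ℕ)

/-- Parametrization of symmetric matrices by functions on `Sym2 (Fin d)`. -/
noncomputable def sigM : (Sym2 (Fin d) → ℝ) →ₗ[ℝ] Matrix (Fin d) (Fin d) ℝ where
  toFun f := Matrix.of fun i j => f s(i, j)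
  map_add' f g := by ext i j; simp
  map_smul' c f := by ext i j; simp

lemma sigM_apply (f : Sym2 (Fin d) → ℝ) (i j : Fin d) : sigM d f i j = f s(i, j) := rfl

lemma sigM_inj : Function.Injective (sigM d) := by
  rw [injective_iff_map_eq_zero]
  intro f hf
  funext s
  induction s using Sym2.ind with
  | _ i j =>
    have h : sigM d f i j = (0 : Matrix (Fin d) (Fin d) ℝ) i j := by rw [hf]
    simpa [sigM_apply] using h

lemma sigM_isSymm (f : Sym2 (Fin d) → ℝ) : (sigM d f).IsSymm := by
  ext i j
  simp only [Matrix.transpose_apply, sigM_apply]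
  rw [Sym2.eq_swap]

lemma exists_sigM {A : Matrix (Fin d) (Fin d) ℝ} (hA : A.IsSymm) : ∃ f, sigM d f = A := by
  refine ⟨Sym2.lift ⟨fun i j => A i j, fun i j => (hA.apply j i)⟩, ?_⟩
  ext i j
  simp [sigM_apply]

/-- The linear parametrization of `P₁(ℝ^d;S)`. -/
noncomputable def phi1 :
    ((Sym2 (Fin d) → ℝ) × (Fin d → Sym2 (Fin d) → ℝ)) →ₗ[ℝ] MatField d where
  toFun p := fun x => sigM d p.1 + ∑ i, x i • sigM d (p.2 i)
  map_add' p q := by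
    funext x
    simp only [Prod.fst_add, Prod.snd_add, map_add, Pi.add_apply, smul_add,
      Finset.sum_add_distrib]
    abel
  map_smul' c p := by
    funext x
    show sigM d (c • p).1 + ∑ i, x i • sigM d ((c • p).2 i)
        = c • (sigM d p.1 + ∑ i, x i • sigM d (p.2 i))
    rw [smul_add, Finset.smul_sum, show (c • p).1 = c • p.1 from rfl, LinearMap.map_smul]
    congr 1
    refine Finset.sum_congr rfl fun i _ => ?_
    rw [show (c • p).2 i = c • p.2 i from rfl, LinearMap.map_smul, smul_comm]

lemma phi1_apply (p) (x : Fin d → ℝ) :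
    phi1 d p x = sigM d p.1 + ∑ i, x i • sigM d (p.2 i) := rfl

/-- The linear parametrization of `sym(x ⊗ H₁)`. -/
noncomputable def phi2 : Matrix (Fin d) (Fin d) ℝ →ₗ[ℝ] MatField d where
  toFun M := fun x => Matrix.of fun i j => (x i * M.mulVec x j + M.mulVec x i * x j) / 2
  map_add' M N := by
    funext x; ext i j
    simp [Matrix.add_mulVec, Pi.add_apply]
    ring
  map_smul' c M := by
    funext x; ext i j
    simp [Matrix.smul_mulVec, Pi.smul_apply, smul_eq_mul]
    ring

lemma phi2_apply (M) (x : Fin d → ℝ) (i j : Fin d) :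
    phi2 d M x i j = (x i * M.mulVec x j + M.mulVec x i * x j) / 2 := rfl

/-- The linear parametrization of `x xᵀ H₁`. -/
noncomputable def phi3 : (Fin d → ℝ) →ₗ[ℝ] MatField d where
  toFun l := fun x => Matrix.of fun i j => x i * x j * (l ⬝ᵥ x)
  map_add' l m := by
    funext x; ext i j
    simp [add_dotProduct, Pi.add_apply]
    ring
  map_smul' c l := by
    funext x; ext i j
    simp [smul_dotProduct, Pi.smul_apply, smul_eq_mul]
    ring

lemma phi3_apply (l) (x : Fin d → ℝ) (i j : Fin d) :
    phi3 d l x i j = x i * x j * (l ⬝ᵥ x) := rfl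

lemma phi1_smul (p) (t : ℝ) (x : Fin d → ℝ) :
    phi1 d p (t • x) = sigM d p.1 + t • ∑ i, x i • sigM d (p.2 i) := by
  rw [phi1_apply]
  congr 1
  rw [Finset.smul_sum]
  refine Finset.sum_congr rfl fun i _ => ?_
  rw [Pi.smul_apply, smul_eq_mul, mul_smul]

lemma phi2_smul (M) (t : ℝ) (x : Fin d → ℝ) :
    phi2 d M (t • x) = (t ^ 2) • phi2 d M x := by
  ext i j
  simp only [Matrix.smul_apply, phi2_apply, Matrix.mulVec_smul, Pi.smul_apply, smul_eq_mul]
  ring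

lemma phi3_smul (l) (t : ℝ) (x : Fin d → ℝ) :
    phi3 d l (t • x) = (t ^ 3) • phi3 d l x := by
  ext i j
  simp only [Matrix.smul_apply, phi3_apply, dotProduct_smul, Pi.smul_apply, smul_eq_mul]
  ring

lemma span_p1 : Submodule.span ℝ (P1SymSet d) = LinearMap.range (phi1 d) := by
  apply le_antisymm
  · rw [Submodule.span_le]
    rintro τ ⟨hsym, A, B, hτ⟩
    have hA : A = τ 0 := by rw [hτ 0]; simp
    have hB : ∀ i, B i = τ (Pi.single i 1) - A := by
      intro i
      have h := hτ (Pi.single i 1)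
      rw [Finset.sum_eq_single i
        (fun j _ hj => by rw [Pi.single_eq_of_ne hj]; simp) (by simp)] at h
      rw [h, Pi.single_eq_same, one_smul]
      abel
    have hAs : A.IsSymm := hA ▸ hsym 0
    have hBs : ∀ i, (B i).IsSymm := fun i => (hB i) ▸ ((hsym _).sub hAs)
    obtain ⟨f, hf⟩ := exists_sigM d hAs
    choose g hg using fun i => exists_sigM d (hBs i)
    exact ⟨(f, g), by funext x; rw [phi1_apply]; simp only [hf, hg]; exact (hτ x).symm⟩
  · rintro τ ⟨p, rfl⟩
    apply Submodule.subset_span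
    refine ⟨fun x => ?_, sigM d p.1, fun i => sigM d (p.2 i), fun x => rfl⟩
    rw [phi1_apply]
    unfold Matrix.IsSymm
    rw [Matrix.transpose_add, Matrix.transpose_sum]
    rw [sigM_isSymm]
    congr 1
    refine Finset.sum_congr rfl fun i _ => ?_
    rw [Matrix.transpose_smul, sigM_isSymm]

lemma span_sym : Submodule.span ℝ (symXH1Set d) = LinearMap.range (phi2 d) := by
  have h : symXH1Set d = ↑(LinearMap.range (phi2 d)) := by
    ext τ
    constructor
    · rintro ⟨M, hM⟩
      exact ⟨M, (funext hM).symm⟩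
    · rintro ⟨M, rfl⟩
      exact ⟨M, fun x => rfl⟩
  rw [h, Submodule.span_eq]

lemma span_xxt : Submodule.span ℝ (xxTH1Set d) = LinearMap.range (phi3 d) := by
  have h : xxTH1Set d = ↑(LinearMap.range (phi3 d)) := by
    ext τ
    constructor
    · rintro ⟨l, hl⟩
      exact ⟨l, (funext hl).symm⟩
    · rintro ⟨l, rfl⟩
      exact ⟨l, fun x => rfl⟩
  rw [h, Submodule.span_eq]

lemma phi1_inj : Function.Injective (phi1 d) := by
  rw [injective_iff_map_eq_zero]
  rintro ⟨a, b⟩ h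
  have h0 : sigM d a = 0 := by
    have := congrFun h 0
    rw [phi1_apply] at this
    simpa using this
  have hb : ∀ i, sigM d (b i) = 0 := by
    intro i
    have := congrFun h (Pi.single i 1)
    rw [phi1_apply, Finset.sum_eq_single i
      (fun j _ hj => by rw [Pi.single_eq_of_ne hj]; simp) (by simp),
      Pi.single_eq_same, one_smul, h0, zero_add] at this
    simpa using this
  have ha : a = 0 := sigM_inj d (by rw [h0, map_zero])
  have hb' : b = 0 := funext fun i => sigM_inj d (by rw [hb i]; simp)
  simp [ha, hb', Prod.ext_iff]

lemma phi2_inj : Function.Injective (phi2 d) := by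
  rw [injective_iff_map_eq_zero]
  intro M h
  ext i k
  have hk : phi2 d M (Pi.single k 1) i k = 0 := by rw [h]; rfl
  rw [phi2_apply, Matrix.mulVec_single_one, Matrix.col_apply, Matrix.col_apply] at hk
  by_cases hik : i = k
  · subst hik
    rw [Pi.single_eq_same] at hk
    simp only [Matrix.zero_apply]
    linarith
  · rw [Pi.single_eq_of_ne hik, Pi.single_eq_same] at hk
    simp only [Matrix.zero_apply]
    linarith

lemma phi3_inj : Function.Injective (phi3 d) := by
  rw [injective_iff_map_eq_zero]
  intro l h
  funext k
  have hk : phi3 d l (Pi.single k 1) k k = 0 := by rw [h]; rfl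
  rw [phi3_apply, Pi.single_eq_same, dotProduct_single] at hk
  simpa using hk

lemma inf23 : LinearMap.range (phi2 d) ⊓ LinearMap.range (phi3 d) = ⊥ := by
  rw [eq_bot_iff]
  rintro f hf
  obtain ⟨⟨M, rfl⟩, l, hl⟩ := hf
  rw [Submodule.mem_bot]
  funext x
  have h1 : phi2 d M ((2:ℝ) • x) = ((2:ℝ) ^ 2) • phi2 d M x := phi2_smul d M 2 x
  have h2 : phi2 d M ((2:ℝ) • x) = ((2:ℝ) ^ 3) • phi2 d M x := by
    rw [← hl, phi3_smul, hl]
  ext i j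
  have h3 := Matrix.ext_iff.mpr (h1.symm.trans h2) i j
  simp only [Matrix.smul_apply, smul_eq_mul] at h3
  show phi2 d M x i j = 0
  norm_num at h3
  linarith

lemma inf123 :
    LinearMap.range (phi1 d) ⊓ (LinearMap.range (phi2 d) ⊔ LinearMap.range (phi3 d)) = ⊥ := by
  rw [eq_bot_iff]
  rintro f hf
  obtain ⟨⟨p, rfl⟩, hsup⟩ := hf
  rw [SetLike.mem_coe, Submodule.mem_sup] at hsup
  obtain ⟨g, ⟨M, rfl⟩, h, ⟨l, rfl⟩, hgh⟩ := hsup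
  rw [Submodule.mem_bot]
  funext x
  ext i j
  have key : ∀ t : ℝ, sigM d p.1 i j + t * (∑ k, x k • sigM d (p.2 k)) i j
      = t ^ 2 * phi2 d M x i j + t ^ 3 * phi3 d l x i j := by
    intro t
    have e1 := congrFun hgh (t • x)
    rw [Pi.add_apply, phi2_smul, phi3_smul, phi1_smul] at e1
    have e2 := Matrix.ext_iff.mpr e1 i j
    simpa only [Matrix.add_apply, Matrix.smul_apply, smul_eq_mul] using e2.symm
  have k0 := key 0
  have k1 := key 1
  have km := key (-1)
  have k2 := key 2
  norm_num at k0 k1 km k2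
  have : phi1 d p x i j = sigM d p.1 i j + (∑ k, x k • sigM d (p.2 k)) i j := by
    rw [phi1_apply, Matrix.add_apply]
  show phi1 d p x i j = 0
  rw [this]
  linarith

lemma card_sym2 : Fintype.card (Sym2 (Fin d)) = (d + 1) * d / 2 := by
  rw [Sym2.card, Fintype.card_fin, Nat.choose_two_right]
  simp

lemma finrank_r1 :
    Module.finrank ℝ ↥(LinearMap.range (phi1 d)) = ((d + 1) * d / 2) * (d + 1) := by
  rw [LinearMap.finrank_range_of_inj (phi1_inj d), Module.finrank_prod, Module.finrank_pi,
    Module.finrank_pi_fintype]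
  simp only [Module.finrank_pi, Finset.sum_const, Finset.card_univ, Fintype.card_fin,
    smul_eq_mul, card_sym2]
  ring

lemma finrank_r2 : Module.finrank ℝ ↥(LinearMap.range (phi2 d)) = d * d := by
  rw [LinearMap.finrank_range_of_inj (phi2_inj d), Module.finrank_matrix]
  simp

lemma finrank_r3 : Module.finrank ℝ ↥(LinearMap.range (phi3 d)) = d := by
  rw [LinearMap.finrank_range_of_inj (phi3_inj d), Module.finrank_pi, Fintype.card_fin]

end Sigma1ppAux

open Sigma1ppAux

/-- The sum `P₁(ℝ^d;S) + sym(x⊗H₁(ℝ^d;ℝ^d)) + x xᵀ H₁(ℝ^d)` is direct and has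
dimension `½ d(d+1)(d+3)`. -/
theorem sigma1pp_direct_sum_dim (d : ℕ) (hd : 1 ≤ d) :
    (Submodule.span ℝ (P1SymSet d)
        ⊓ (Submodule.span ℝ (symXH1Set d) ⊔ Submodule.span ℝ (xxTH1Set d)) = ⊥) ∧
    (Submodule.span ℝ (symXH1Set d) ⊓ Submodule.span ℝ (xxTH1Set d) = ⊥) ∧
    Module.finrank ℝ
        ↥(Submodule.span ℝ (P1SymSet d) ⊔ Submodule.span ℝ (symXH1Set d)
          ⊔ Submodule.span ℝ (xxTH1Set d))
      = d * (d + 1) * (d + 3) / 2 := by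
  rw [span_p1, span_sym, span_xxt]
  refine ⟨inf123 d, inf23 d, ?_⟩
  rw [sup_assoc]
  have e23 := Submodule.finrank_sup_add_finrank_inf_eq
    (LinearMap.range (phi2 d)) (LinearMap.range (phi3 d))
  rw [inf23 d, finrank_bot, add_zero] at e23
  have e123 := Submodule.finrank_sup_add_finrank_inf_eq
    (LinearMap.range (phi1 d)) (LinearMap.range (phi2 d) ⊔ LinearMap.range (phi3 d))
  rw [inf123 d, finrank_bot, add_zero] at e123
  rw [e123, e23, finrank_r1, finrank_r2, finrank_r3]
  obtain ⟨k, hk⟩ := Nat.even_mul_succ_self d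
  have hdk : d * (d + 1) = 2 * k := by omega
  have hN : (d + 1) * d / 2 = k := by rw [mul_comm, hdk]; omega
  have hrhs : d * (d + 1) * (d + 3) / 2 = k * (d + 3) := by
    have : d * (d + 1) * (d + 3) = 2 * (k * (d + 3)) := by rw [hdk]; ring
    omega
  rw [hN, hrhs]
  have h2 : d * d + d = 2 * k := by rw [← hdk]; ring
  rw [h2]
  ring
end
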